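/- Parametrize the circle C by Psi(theta) = (1/3 + (1/3)cos(theta), 1/3 - (1/6)cos(theta) + (1/(2 sqrt(3))) sin(theta), 1/3 - (1/6)cos(theta) - (1/(2 sqrt(3))) sin(theta)). Then: (i) for every theta in the open interval (-pi, pi), B_0(Psi(theta)) = Psi(g_0(theta)) where g_0(theta) = 2 arctan((1/3) tan(theta/2)); equivalently, cos(g_0(theta)) = (5 cos(theta) + 4)/(4 cos(theta) + 5) and sin(g_0(theta)) = 3 sin(theta)/(4 cos(theta) + 5); and (ii) the fixed points of B_0 in the closed disk D are exactly the two boundary points Psi(0) = (2/3, 1/6, 1/6) and Psi(pi) = (0, 1/2, 1/2). -/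

import Mathlib

open Real

/-- The rational map `B₀(x,y,z) = (9x, 2x+2y-z, 2x-y+2z)/(13x+y+z)`. -/
noncomputable def B0map (p : ℝ × ℝ × ℝ) : ℝ × ℝ × ℝ :=
  (9 * p.1 / (13 * p.1 + p.2.1 + p.2.2),
   (2 * p.1 + 2 * p.2.1 - p.2.2) / (13 * p.1 + p.2.1 + p.2.2),
   (2 * p.1 - p.2.1 + 2 * p.2.2) / (13 * p.1 + p.2.1 + p.2.2))

/-- The closed disk `D` of radius `1/√6` centered at `(1/3,1/3,1/3)` in the plane
`x + y + z = 1`. -/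
def Ddisk : Set (ℝ × ℝ × ℝ) :=
  {p | p.1 + p.2.1 + p.2.2 = 1 ∧
    (p.1 - 1 / 3) ^ 2 + (p.2.1 - 1 / 3) ^ 2 + (p.2.2 - 1 / 3) ^ 2 ≤ 1 / 6}

/-- The boundary circle `C` of the disk `D`. -/
def Ccirc : Set (ℝ × ℝ × ℝ) :=
  {p | p.1 + p.2.1 + p.2.2 = 1 ∧
    (p.1 - 1 / 3) ^ 2 + (p.2.1 - 1 / 3) ^ 2 + (p.2.2 - 1 / 3) ^ 2 = 1 / 6}

/-- The parametrization `Ψ(θ)` of the boundary circle `C`. -/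
noncomputable def Psi (θ : ℝ) : ℝ × ℝ × ℝ :=
  (1 / 3 + (1 / 3) * cos θ,
   1 / 3 - (1 / 6) * cos θ + (1 / (2 * Real.sqrt 3)) * sin θ,
   1 / 3 - (1 / 6) * cos θ - (1 / (2 * Real.sqrt 3)) * sin θ)

/-- The circle map `g₀(θ) = 2 arctan((1/3) tan(θ/2))`. -/
noncomputable def g0 (θ : ℝ) : ℝ :=
  2 * arctan ((1 / 3) * tan (θ / 2))

theorem trig_key18 (θ : ℝ) (h : θ ∈ Set.Ioo (-π) π) :
    cos (g0 θ) = (5 * cos θ + 4) / (4 * cos θ + 5) ∧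
    sin (g0 θ) = 3 * sin θ / (4 * cos θ + 5) := by
  obtain ⟨h1, h2⟩ := h
  have hC : 0 < cos (θ/2) := Real.cos_pos_of_mem_Ioo ⟨by linarith, by linarith⟩
  set C := cos (θ/2) with hCdef
  set S := sin (θ/2) with hSdef
  have hpyth : S^2 + C^2 = 1 := sin_sq_add_cos_sq _
  have hS2 : S^2 = 1 - C^2 := by linarith
  have ht : tan (θ/2) = S / C := tan_eq_sin_div_cos _
  set u : ℝ := (1/3) * tan (θ/2) with hu
  have hu' : u = S/(3*C) := by rw [hu, ht]; ring
  have h1u : (0:ℝ) < 1 + u^2 := by positivity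
  have hsq : Real.sqrt (1+u^2) * Real.sqrt (1+u^2) = 1+u^2 := Real.mul_self_sqrt h1u.le
  have hcosA : cos (arctan u) ^ 2 = 1/(1+u^2) := by
    rw [Real.cos_arctan, div_pow, one_pow, Real.sq_sqrt h1u.le]
  have hcosg : cos (g0 θ) = (1 - u^2)/(1+u^2) := by
    rw [g0, Real.cos_two_mul, hcosA]; field_simp; ring
  have hsing : sin (g0 θ) = 2*u/(1+u^2) := by
    rw [g0, Real.sin_two_mul, Real.sin_arctan, Real.cos_arctan,
      mul_assoc, div_mul_div_comm, mul_one, hsq]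
    ring
  have hcost : cos θ = 2*C^2 - 1 := by
    have := Real.cos_two_mul (θ/2)
    rwa [show 2*(θ/2) = θ by ring] at this
  have hsint : sin θ = 2*S*C := by
    have := Real.sin_two_mul (θ/2)
    rw [show 2*(θ/2) = θ by ring] at this
    linarith [this]
  have hd2 : (0:ℝ) < 4 * (2*C^2-1) + 5 := by nlinarith
  rw [hcosg, hsing, hu', hcost, hsint]
  constructor
  · rw [div_eq_div_iff (by positivity) hd2.ne']
    field_simp
    linear_combination (-18*C^2) * hS2
  · rw [div_eq_div_iff (by positivity) hd2.ne']
    field_simp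
    linear_combination (-S) * hS2

/-- (i) For every `θ ∈ (-π, π)`, `B₀(Ψ(θ)) = Ψ(g₀(θ))`; equivalently
`cos(g₀(θ)) = (5cos θ + 4)/(4cos θ + 5)` and `sin(g₀(θ)) = 3 sin θ/(4cos θ + 5)`.
(ii) The fixed points of `B₀` in the closed disk `D` are exactly the two boundary
points `Ψ(0) = (2/3, 1/6, 1/6)` and `Ψ(π) = (0, 1/2, 1/2)`. -/
theorem stmt_18 :
    (∀ θ ∈ Set.Ioo (-π) π,
      B0map (Psi θ) = Psi (g0 θ) ∧
      cos (g0 θ) = (5 * cos θ + 4) / (4 * cos θ + 5) ∧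
      sin (g0 θ) = 3 * sin θ / (4 * cos θ + 5)) ∧
    (∀ p ∈ Ddisk, B0map p = p ↔ p = Psi 0 ∨ p = Psi π) ∧
    Psi 0 = (2 / 3, 1 / 6, 1 / 6) ∧
    Psi π = (0, 1 / 2, 1 / 2) := by
  have h3 : (0:ℝ) < Real.sqrt 3 := Real.sqrt_pos.mpr (by norm_num)
  have hs3 : Real.sqrt 3 ^ 2 = 3 := Real.sq_sqrt (by norm_num)
  have hP0 : Psi 0 = (2 / 3, 1 / 6, 1 / 6) := by
    simp [Psi, Real.cos_zero, Real.sin_zero]; norm_num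
  have hPpi : Psi π = (0, 1 / 2, 1 / 2) := by
    simp [Psi, Real.cos_pi, Real.sin_pi]; norm_num
  refine ⟨?_, ?_, hP0, hPpi⟩
  · intro θ hθ
    obtain ⟨hcg, hsg⟩ := trig_key18 θ hθ
    refine ⟨?_, hcg, hsg⟩
    have hden : (0:ℝ) < 4 * cos θ + 5 := by nlinarith [neg_one_le_cos θ]
    simp only [B0map, Psi, hcg, hsg, Prod.mk.injEq]
    have hD : 13 * (1 / 3 + 1 / 3 * cos θ) + (1 / 3 - 1 / 6 * cos θ + 1 / (2 * Real.sqrt 3) * sin θ)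
        + (1 / 3 - 1 / 6 * cos θ - 1 / (2 * Real.sqrt 3) * sin θ) = 4 * cos θ + 5 := by ring
    rw [hD]
    refine ⟨?_, ?_, ?_⟩
    · field_simp [(by linarith : (0:ℝ) < cos θ * 4 + 5).ne', h3.ne']
      ring
    · field_simp [(by linarith : (0:ℝ) < cos θ * 4 + 5).ne', h3.ne']
      ring
    · field_simp [(by linarith : (0:ℝ) < cos θ * 4 + 5).ne', h3.ne']
      ring
  · rintro ⟨x, y, z⟩ ⟨hsum, hdisk⟩
    simp only [Set.mem_setOf_eq] at hsum hdisk
    have hx2 : (x - 1/3)^2 ≤ 1/6 := by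
      nlinarith [sq_nonneg (y - 1/3), sq_nonneg (z - 1/3)]
    have hdpos : (0:ℝ) < 13 * x + y + z := by nlinarith
    rw [hP0, hPpi]
    constructor
    · intro hfix
      simp only [B0map, Prod.mk.injEq] at hfix
      obtain ⟨e1, e2, e3⟩ := hfix
      rw [div_eq_iff hdpos.ne'] at e1 e2 e3
      have hx : x = 0 ∨ x = 2/3 := by
        have hxx : x * (12 * x - 8) = 0 := by linear_combination -e1 - x * hsum
        rcases mul_eq_zero.mp hxx with h | h
        · exact Or.inl h
        · exact Or.inr (by linarith)
      rcases hx with h | h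
      · right
        subst h
        have h9 : 13*(0:ℝ) + y + z = 1 := by linarith
        rw [h9, mul_one] at e2 e3
        have hy : y = 1/2 := by linarith
        have hz : z = 1/2 := by linarith
        simp only [Prod.mk.injEq]
        exact ⟨by norm_num, hy, hz⟩
      · left
        subst h
        have h9 : 13*(2/3:ℝ) + y + z = 9 := by linarith
        rw [h9] at e2 e3
        have hy : y = 1/6 := by linarith
        have hz : z = 1/6 := by linarith
        simp only [Prod.mk.injEq]
        exact ⟨by norm_num, hy, hz⟩
    · rintro (h | h) <;> rw [h] <;> simp only [B0map] <;> norm_num
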